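/- Let C be an M(ℕ)-category and x a finitely supported object of C. If v and v̄ in M(ℕ) agree on supp(x), then v • x = v̄ • x and ι(v,x) = ι(v̄,x); consequently [v,u]^x = [v̄,u]^x and [u,v]^x = [u,v̄]^x for every u in M(ℕ). -/

import Mathlib

open CategoryTheory

/-- The monoid of injective self-maps of `U`, under composition. -/
def Minj (U : Type*) : Submonoid (Function.End U) where
  carrier := {f | Function.Injective f}
  mul_mem' := fun hf hg => hf.comp hg
  one_mem' := Function.injective_id

instance (U : Type*) : FunLike (Minj U) U U where
  coe u := u.1
  coe_injective := fun _ _ h => Subtype.ext h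

@[simp] lemma Minj.mul_apply {U : Type*} (u v : Minj U) (a : U) : (u * v) a = u (v a) := rfl

/-- `x` is supported on `A` if every injection fixing `A` elementwise fixes `x`. -/
def Supported {U : Type*} {X : Type*} [MulAction (Minj U) X] (A : Set U) (x : X) : Prop :=
  ∀ u : Minj U, (∀ a ∈ A, u a = a) → u • x = x

/-- `x` is finitely supported if it is supported on some finite subset of `U`. -/
def FinSupported {U : Type*} {X : Type*} [MulAction (Minj U) X] (x : X) : Prop :=
  ∃ A : Finset U, Supported (A : Set U) x

/-- The support of `x`: the intersection of all finite subsets of `U` on which `x`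
is supported. -/
def supp {U : Type*} {X : Type*} [MulAction (Minj U) X] (x : X) : Set U :=
  {i : U | ∀ A : Finset U, Supported (A : Set U) x → i ∈ A}

/-- An `M(U)`-category: a category with an action of the injection monoid on objects,
together with coherent isomorphisms `ι u x : x ≅ u • x`. The action of `u` on morphisms
is then given by conjugation with these isomorphisms. -/
structure MCat (U : Type*) (C : Type*) [Category C] [MulAction (Minj U) C] where
  ι : ∀ (u : Minj U) (x : C), x ≅ u • x
  ι_mul : ∀ (u v : Minj U) (x : C),
    (ι u x).hom ≫ (ι v (u • x)).hom = (ι (v * u) x).hom ≫ eqToHom (mul_smul v u x)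

namespace MCat

variable {U : Type*} {C : Type*} [Category C] [MulAction (Minj U) C]

/-- The action `u_*` of an injection on morphisms: `u_*(f) = ι(u,y) ∘ f ∘ ι(u,x)⁻¹`. -/
def act (h : MCat U C) (u : Minj U) {x y : C} (f : x ⟶ y) : u • x ⟶ u • y :=
  (h.ι u x).inv ≫ f ≫ (h.ι u y).hom

/-- The natural isomorphism `[v,u]^x := ι(v,x) ∘ ι(u,x)⁻¹ : u • x ⟶ v • x`. -/
def tw (h : MCat U C) (v u : Minj U) (x : C) : u • x ⟶ v • x :=
  (h.ι u x).inv ≫ (h.ι v x).hom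

@[simp] lemma act_id (h : MCat U C) (u : Minj U) (x : C) : h.act u (𝟙 x) = 𝟙 (u • x) := by
  simp [act]

@[simp] lemma act_comp (h : MCat U C) (u : Minj U) {x y z : C} (f : x ⟶ y) (g : y ⟶ z) :
    h.act u (f ≫ g) = h.act u f ≫ h.act u g := by
  simp [act]

lemma ι_natural (h : MCat U C) (u : Minj U) {x y : C} (f : x ⟶ y) :
    (h.ι u x).hom ≫ h.act u f = f ≫ (h.ι u y).hom := by
  simp [act]

end MCat


section SetHelpers
open Set

-- equiv between two infinite subsets of ℕ
noncomputable def eqvInf (A B : Set ℕ) (hA : A.Infinite) (hB : B.Infinite) : ↥A ≃ ↥B := by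
  have hA' : Infinite ↥A := hA.to_subtype
  have hB' : Infinite ↥B := hB.to_subtype
  have dA : Nonempty (Denumerable ↥A) := nonempty_denumerable_iff.mpr ⟨inferInstance, hA'⟩
  have dB : Nonempty (Denumerable ↥B) := nonempty_denumerable_iff.mpr ⟨inferInstance, hB'⟩
  exact (@Denumerable.eqv _ dA.some).trans (@Denumerable.eqv _ dB.some).symm

-- split an infinite set into two infinite pieces
lemma exists_split (A : Set ℕ) (hA : A.Infinite) :
    ∃ B : Set ℕ, B ⊆ A ∧ B.Infinite ∧ (A \ B).Infinite := by
  have e := eqvInf A univ hA infinite_univ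
  refine ⟨Subtype.val '' (e ⁻¹' {n : ↥(univ : Set ℕ) | Even (n : ℕ)}), ?_, ?_, ?_⟩
  · rintro n ⟨m, _, rfl⟩; exact m.2
  · apply Set.Infinite.image (Subtype.val_injective.injOn)
    have : ({n : ↥(univ : Set ℕ) | Even (n : ℕ)}).Infinite := by
      have : Set.Infinite {n : ℕ | Even n} := by
        apply Set.infinite_of_injective_forall_mem (f := fun k : ℕ => 2 * k)
        case hi => intro a b hab; simp only [] at hab; omega
        case hf => intro a; exact ⟨a, two_mul a⟩
      have := this.preimage (f := (Subtype.val : ↥(univ : Set ℕ) → ℕ)) ?_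
      · exact this
      · intro n _; exact ⟨⟨n, trivial⟩, rfl⟩
    have h2 : (e ⁻¹' {n : ↥(univ : Set ℕ) | Even (n:ℕ)}).Infinite := by
      apply Set.Infinite.preimage this
      intro y _; exact ⟨e.symm y, by simp⟩
    exact h2
  · -- A \ B ⊇ image of odd part
    have hsub : Subtype.val '' (e ⁻¹' {n : ↥(univ : Set ℕ) | ¬ Even (n : ℕ)}) ⊆
        A \ Subtype.val '' (e ⁻¹' {n : ↥(univ : Set ℕ) | Even (n : ℕ)}) := by
      rintro n ⟨m, hm, rfl⟩
      refine ⟨m.2, ?_⟩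
      rintro ⟨m', hm', hval⟩
      have : m' = m := Subtype.ext hval
      subst this
      exact hm hm'
    refine Set.Infinite.mono hsub ?_
    apply Set.Infinite.image (Subtype.val_injective.injOn)
    apply Set.Infinite.preimage
    · have : Set.Infinite {n : ℕ | ¬ Even n} := by
        apply Set.infinite_of_injective_forall_mem (f := fun k : ℕ => 2 * k + 1)
        case hi => intro a b hab; simp only [] at hab; omega
        case hf => intro a; simp [Nat.even_add_one, parity_simps]
      have := this.preimage (f := (Subtype.val : ↥(univ : Set ℕ) → ℕ)) ?_
      · exact this
      · intro n _; exact ⟨⟨n, trivial⟩, rfl⟩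
    · intro y _; exact ⟨e.symm y, by simp⟩

end SetHelpers



section Builder
variable {Cs E : Set ℕ}

open Classical in
/-- Extend the identity on `Cs` by an equivalence from the complement onto `E`. -/
noncomputable def extendId (Cs E : Set ℕ) (φ : ↥(Csᶜ) ≃ ↥E) : ℕ → ℕ :=
  fun n => if h : n ∈ Cs then n else (φ ⟨n, h⟩ : ℕ)

lemma extendId_mem (φ : ↥(Csᶜ) ≃ ↥E) {n : ℕ} (hn : n ∈ Cs) : extendId Cs E φ n = n := by
  simp [extendId, hn]

lemma extendId_not_mem (φ : ↥(Csᶜ) ≃ ↥E) {n : ℕ} (hn : n ∉ Cs) :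
    extendId Cs E φ n = (φ ⟨n, hn⟩ : ℕ) := by simp [extendId, hn]

lemma extendId_inj (φ : ↥(Csᶜ) ≃ ↥E) (hd : ∀ e ∈ E, e ∉ Cs) :
    Function.Injective (extendId Cs E φ) := by
  intro m n hmn
  by_cases hm : m ∈ Cs <;> by_cases hn : n ∈ Cs
  · rwa [extendId_mem φ hm, extendId_mem φ hn] at hmn
  · rw [extendId_mem φ hm, extendId_not_mem φ hn] at hmn
    exact absurd (hmn ▸ hm) (hd _ (φ ⟨n, hn⟩).2)
  · rw [extendId_not_mem φ hm, extendId_mem φ hn] at hmn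
    exact absurd (hmn ▸ hn) (hd _ (φ ⟨m, hm⟩).2)
  · rw [extendId_not_mem φ hm, extendId_not_mem φ hn] at hmn
    have := φ.injective (Subtype.ext hmn)
    exact congrArg Subtype.val this

lemma extendId_range (φ : ↥(Csᶜ) ≃ ↥E) {n : ℕ} :
    extendId Cs E φ n ∈ Cs ∪ E := by
  by_cases hn : n ∈ Cs
  · rw [extendId_mem φ hn]; exact Or.inl hn
  · rw [extendId_not_mem φ hn]; exact Or.inr (φ ⟨n, hn⟩).2
end Builder


section CatHelpers
variable {U : Type*} {C : Type*} [Category C] [MulAction (Minj U) C]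

lemma ι_of_eq (h : MCat U C) {u v : Minj U} (x : C) (huv : u = v) :
    (h.ι u x).hom = (h.ι v x).hom ≫ eqToHom (by rw [huv]) := by
  subst huv; simp

lemma ι_congr (h : MCat U C) (u : Minj U) {y z : C} (e : y = z) :
    (h.ι u y).hom = eqToHom e ≫ (h.ι u z).hom ≫ eqToHom (by rw [e]) := by
  subst e; simp

lemma trivial_of_fixes (h : MCat U C) {x : C} {j p : Minj U}
    (hpj : p * j = j) (ej : j • x = x) :
    ∃ e : p • x = x, (h.ι p x).hom = eqToHom e.symm := by
  have e : p • x = x := by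
    calc p • x = p • (j • x) := by rw [ej]
      _ = (p * j) • x := (mul_smul p j x).symm
      _ = j • x := by rw [hpj]
      _ = x := ej
  refine ⟨e, ?_⟩
  have hm := h.ι_mul j p x
  rw [ι_of_eq h x hpj] at hm
  rw [ι_congr h p ej] at hm
  simp only [Category.assoc] at hm
  rw [cancel_epi (f := (h.ι j x).hom)] at hm
  rw [eqToHom_comp_iff, comp_eqToHom_iff] at hm
  rw [hm]; simp

lemma trivial_mul (h : MCat U C) {x : C} {a b : Minj U}
    (ea : a • x = x) (ha : (h.ι a x).hom = eqToHom ea.symm)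
    (eb : b • x = x) (hb : (h.ι b x).hom = eqToHom eb.symm) :
    ∃ e : (b * a) • x = x, (h.ι (b * a) x).hom = eqToHom e.symm := by
  have e : (b * a) • x = x := by
    calc (b * a) • x = b • (a • x) := mul_smul b a x
      _ = b • x := by rw [ea]
      _ = x := eb
  refine ⟨e, ?_⟩
  have hm := h.ι_mul a b x
  rw [ι_congr h b ea, ha, hb] at hm
  replace hm := hm.symm
  rw [comp_eqToHom_iff] at hm
  rw [hm]; simp

lemma trivial_right_cancel (h : MCat U C) {x : C} {a u : Minj U}
    (ea : a • x = x) (ha : (h.ι a x).hom = eqToHom ea.symm)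
    (eb : (u * a) • x = x) (hb : (h.ι (u * a) x).hom = eqToHom eb.symm) :
    ∃ e : u • x = x, (h.ι u x).hom = eqToHom e.symm := by
  have e : u • x = x := by
    calc u • x = u • (a • x) := by rw [ea]
      _ = (u * a) • x := (mul_smul u a x).symm
      _ = x := eb
  refine ⟨e, ?_⟩
  have hm := h.ι_mul a u x
  rw [ι_congr h u ea, ha, hb] at hm
  rw [eqToHom_comp_iff, eqToHom_comp_iff, comp_eqToHom_iff] at hm
  rw [hm]; simp

lemma trivial_of_eq (h : MCat U C) {x : C} {u v : Minj U} (huv : u = v)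
    (e : u • x = x) (hh : (h.ι u x).hom = eqToHom e.symm) :
    ∃ e' : v • x = x, (h.ι v x).hom = eqToHom e'.symm := by
  subst huv; exact ⟨e, hh⟩

lemma ι_perm_decomp (h : MCat U C) {x : C} {v π r : Minj U}
    (hv : π * r = v) (er : r • x = x) (hr : (h.ι r x).hom = eqToHom er.symm) :
    ∃ e : v • x = π • x, (h.ι v x).hom = (h.ι π x).hom ≫ eqToHom e.symm := by
  have e : v • x = π • x := by
    calc v • x = (π * r) • x := by rw [hv]
      _ = π • (r • x) := mul_smul π r x
      _ = π • x := by rw [er]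
  refine ⟨e, ?_⟩
  have hm := h.ι_mul r π x
  rw [ι_of_eq h x hv, ι_congr h π er, hr] at hm
  simp only [Category.assoc, eqToHom_trans, eqToHom_refl, Category.id_comp] at hm
  replace hm := hm.symm
  rw [comp_eqToHom_iff] at hm
  rw [hm]; simp

end CatHelpers

section MinjHelpers

lemma Minj.ext' {U : Type*} {u v : Minj U} (h : ∀ n, u n = v n) : u = v :=
  Subtype.ext (funext h)

lemma Minj.injective {U : Type*} (u : Minj U) : Function.Injective (⇑u) := u.2

end MinjHelpers

section KeyLemmas
variable {C : Type*} [Category C] [MulAction (Minj ℕ) C]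

open Set

/-- If `p` fixes `S` pointwise and has infinitely many fixed points, then `p` acts
trivially on anything supported on `S`. -/
lemma trivial_of_fix_infinite (h : MCat ℕ C) {x : C} (S : Finset ℕ)
    (hsupp : Supported (↑S : Set ℕ) x) (p : Minj ℕ)
    (hpS : ∀ a ∈ (↑S : Set ℕ), p a = a) (hfix : {n : ℕ | p n = n}.Infinite) :
    ∃ e : p • x = x, (h.ι p x).hom = eqToHom e.symm := by
  have hTS : ({n : ℕ | p n = n} \ (↑S : Set ℕ)).Infinite := hfix.diff S.finite_toSet
  have hSc : (((↑S : Set ℕ))ᶜ).Infinite := S.finite_toSet.infinite_compl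
  let φ := eqvInf _ _ hSc hTS
  have hdisj : ∀ e ∈ ({n : ℕ | p n = n} \ (↑S : Set ℕ)), e ∉ (↑S : Set ℕ) := fun e he => he.2
  let j : Minj ℕ := ⟨extendId (↑S) _ φ, extendId_inj φ hdisj⟩
  have hj : ∀ n, j n = extendId (↑S) _ φ n := fun n => rfl
  have hjS : ∀ a ∈ (↑S : Set ℕ), j a = a := fun a ha => by
    rw [hj]; exact extendId_mem φ ha
  have ej : j • x = x := hsupp j hjS
  have hpj : p * j = j := by
    apply Minj.ext'
    intro n
    rw [Minj.mul_apply, hj]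
    by_cases hn : n ∈ (↑S : Set ℕ)
    · rw [extendId_mem φ hn]; exact hpS n hn
    · rw [extendId_not_mem φ hn]
      exact (φ ⟨n, hn⟩).2.1
  exact trivial_of_fixes h hpj ej

/-- If `u` fixes `S` pointwise and has infinite co-image, then `u` acts trivially on
anything supported on `S`. -/
lemma trivial_of_coimage_infinite (h : MCat ℕ C) {x : C} (S : Finset ℕ)
    (hsupp : Supported (↑S : Set ℕ) x) (u : Minj ℕ)
    (huS : ∀ a ∈ (↑S : Set ℕ), u a = a) (hco : ((Set.range ⇑u)ᶜ).Infinite) :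
    ∃ e : u • x = x, (h.ι u x).hom = eqToHom e.symm := by
  classical
  have hrange : (Set.range ⇑u).Infinite := Set.infinite_range_of_injective u.2
  have hSr : (↑S : Set ℕ) ⊆ Set.range ⇑u := fun a ha => ⟨a, huS a ha⟩
  have hdiff : (Set.range ⇑u \ (↑S : Set ℕ)).Infinite := hrange.diff S.finite_toSet
  obtain ⟨H₁, hH₁sub, hH₁, hH₂⟩ := exists_split _ hdiff
  set H₂ : Set ℕ := (Set.range ⇑u \ (↑S : Set ℕ)) \ H₁ with hH₂def
  set Cst : Set ℕ := (↑S : Set ℕ) ∪ H₁ with hCdef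
  have hCsub : Cst ⊆ Set.range ⇑u := by
    rintro n (hn | hn)
    · exact hSr hn
    · exact (hH₁sub hn).1
  have hCc : (Set.range ⇑u)ᶜ ⊆ Cstᶜ := fun n hn hmem => hn (hCsub hmem)
  have hCcInf : (Cstᶜ).Infinite := hco.mono hCc
  have hH₂Cc : H₂ ⊆ Cstᶜ := by
    rintro n ⟨⟨_, hnS⟩, hnH₁⟩
    rintro (hS | hH)
    · exact hnS hS
    · exact hnH₁ hH
  let φ := eqvInf _ _ hCcInf hH₂
  have hdisj : ∀ e ∈ H₂, e ∉ Cst := fun e he => hH₂Cc he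
  let p : Minj ℕ := ⟨extendId Cst H₂ φ, extendId_inj φ hdisj⟩
  have hp : ∀ n, p n = extendId Cst H₂ φ n := fun n => rfl
  -- the union is everything in range u
  have hunion : ∀ n, n ∉ Cst → n ∉ H₂ → n ∉ Set.range ⇑u := by
    intro n hnC hnH₂ hnr
    by_cases hnS : n ∈ (↑S : Set ℕ)
    · exact hnC (Or.inl hnS)
    · by_cases hnH₁ : n ∈ H₁
      · exact hnC (Or.inr hnH₁)
      · exact hnH₂ ⟨⟨hnr, hnS⟩, hnH₁⟩
  -- define q
  let qf : ℕ → ℕ := fun n =>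
    if hn : n ∈ Cst then u n else if h2 : n ∈ H₂ then u ((φ.symm ⟨n, h2⟩ : ℕ)) else n
  have hq1 : ∀ n (hn : n ∈ Cst), qf n = u n := fun n hn => dif_pos hn
  have hq2 : ∀ n (hn : n ∉ Cst) (h2 : n ∈ H₂), qf n = u ((φ.symm ⟨n, h2⟩ : ℕ)) := by
    intro n hn h2; simp only [qf, dif_neg hn, dif_pos h2]
  have hq3 : ∀ n (hn : n ∉ Cst) (h2 : n ∉ H₂), qf n = n := by
    intro n hn h2; simp only [qf, dif_neg hn, dif_neg h2]
  have hqinj : Function.Injective qf := by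
    intro m n hmn
    by_cases hm : m ∈ Cst <;> by_cases hn : n ∈ Cst
    · rw [hq1 m hm, hq1 n hn] at hmn; exact u.2 hmn
    · rw [hq1 m hm] at hmn
      by_cases h2 : n ∈ H₂
      · rw [hq2 n hn h2] at hmn
        have := u.2 hmn
        exact absurd (this ▸ hm) (φ.symm ⟨n, h2⟩).2
      · rw [hq3 n hn h2] at hmn
        exact absurd ⟨m, hmn⟩ (hunion n hn h2)
    · rw [hq1 n hn] at hmn
      by_cases h2 : m ∈ H₂
      · rw [hq2 m hm h2] at hmn
        have := u.2 hmn
        exact absurd (this ▸ hn) (φ.symm ⟨m, h2⟩).2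
      · rw [hq3 m hm h2] at hmn
        exact absurd ⟨n, hmn.symm⟩ (hunion m hm h2)
    · by_cases h2m : m ∈ H₂ <;> by_cases h2n : n ∈ H₂
      · rw [hq2 m hm h2m, hq2 n hn h2n] at hmn
        have := Subtype.ext (u.2 hmn)
        have := φ.symm.injective this
        exact congrArg Subtype.val this
      · rw [hq2 m hm h2m, hq3 n hn h2n] at hmn
        exact absurd ⟨_, hmn⟩ (hunion n hn h2n)
      · rw [hq3 m hm h2m, hq2 n hn h2n] at hmn
        exact absurd ⟨_, hmn.symm⟩ (hunion m hm h2m)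
      · rw [hq3 m hm h2m, hq3 n hn h2n] at hmn; exact hmn
  let q : Minj ℕ := ⟨qf, hqinj⟩
  have hqapp : ∀ n, q n = qf n := fun n => rfl
  -- p fixes S and has infinitely many fixed points
  have hpS : ∀ a ∈ (↑S : Set ℕ), p a = a := by
    intro a ha; rw [hp]; exact extendId_mem φ (Or.inl ha)
  have hpfix : {n : ℕ | p n = n}.Infinite := by
    apply Set.Infinite.mono (s := H₁)
    · intro n hn
      show p n = n
      rw [hp]; exact extendId_mem φ (Or.inr hn)
    · exact hH₁
  -- q fixes S and has infinitely many fixed points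
  have hqS : ∀ a ∈ (↑S : Set ℕ), q a = a := by
    intro a ha; rw [hqapp, hq1 a (Or.inl ha)]; exact huS a ha
  have hqfix : {n : ℕ | q n = n}.Infinite := by
    apply Set.Infinite.mono (s := (Set.range ⇑u)ᶜ)
    · intro n hn
      show q n = n
      have hnC : n ∉ Cst := hCc hn
      have hnH₂ : n ∉ H₂ := fun h2 => hn h2.1.1
      rw [hqapp, hq3 n hnC hnH₂]
    · exact hco
  -- q * p = u
  have hqp : q * p = u := by
    apply Minj.ext'
    intro n
    rw [Minj.mul_apply, hqapp, hp]
    by_cases hn : n ∈ Cst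
    · rw [extendId_mem φ hn, hq1 n hn]
    · rw [extendId_not_mem φ hn]
      have hmem : ((φ ⟨n, hn⟩ : ↥H₂) : ℕ) ∈ H₂ := (φ ⟨n, hn⟩).2
      have hnotC : ((φ ⟨n, hn⟩ : ↥H₂) : ℕ) ∉ Cst := hdisj _ hmem
      rw [hq2 _ hnotC hmem]
      congr 1
      have : (⟨((φ ⟨n, hn⟩ : ↥H₂) : ℕ), hmem⟩ : ↥H₂) = φ ⟨n, hn⟩ := Subtype.ext rfl
      rw [this, Equiv.symm_apply_apply]
  obtain ⟨ep, hpTriv⟩ := trivial_of_fix_infinite h S hsupp p hpS hpfix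
  obtain ⟨eq', hqTriv⟩ := trivial_of_fix_infinite h S hsupp q hqS hqfix
  obtain ⟨em, hmTriv⟩ := trivial_mul h ep hpTriv eq' hqTriv
  exact trivial_of_eq h hqp em hmTriv

end KeyLemmas

section Key2
variable {C : Type*} [Category C] [MulAction (Minj ℕ) C]
open Set

/-- Main key lemma: any injection fixing a finite support acts trivially. -/
lemma trivial_of_fixes_support (h : MCat ℕ C) {x : C} (S : Finset ℕ)
    (hsupp : Supported (↑S : Set ℕ) x) (u : Minj ℕ)
    (huS : ∀ a ∈ (↑S : Set ℕ), u a = a) :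
    ∃ e : u • x = x, (h.ι u x).hom = eqToHom e.symm := by
  have hSc : (((↑S : Set ℕ))ᶜ).Infinite := S.finite_toSet.infinite_compl
  obtain ⟨E₁, hE₁sub, hE₁, hE₂⟩ := exists_split _ hSc
  set E₂ : Set ℕ := ((↑S : Set ℕ))ᶜ \ E₁ with hE₂def
  let φ := eqvInf _ _ hSc hE₁
  have hdisj : ∀ e ∈ E₁, e ∉ (↑S : Set ℕ) := fun e he => hE₁sub he
  let e₀ : Minj ℕ := ⟨extendId (↑S) E₁ φ, extendId_inj φ hdisj⟩
  have he₀ : ∀ n, e₀ n = extendId (↑S) E₁ φ n := fun n => rfl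
  have he₀S : ∀ a ∈ (↑S : Set ℕ), e₀ a = a := fun a ha => by
    rw [he₀]; exact extendId_mem φ ha
  have hrange : ∀ n, e₀ n ∈ (↑S : Set ℕ) ∪ E₁ := fun n => by
    rw [he₀]; exact extendId_range φ
  have hE₂r : ∀ n ∈ E₂, n ∉ Set.range ⇑e₀ := by
    rintro n hn ⟨m, rfl⟩
    rcases hrange m with hc | hc
    · exact hn.1 hc
    · exact hn.2 hc
  have hco₀ : ((Set.range ⇑e₀)ᶜ).Infinite := by
    apply Set.Infinite.mono (s := E₂) _ hE₂
    intro n hn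
    exact hE₂r n hn
  have hcoU : ((Set.range ⇑(u * e₀))ᶜ).Infinite := by
    apply Set.Infinite.mono (s := ⇑u '' E₂)
    · rintro _ ⟨m, hm, rfl⟩ ⟨k, hk⟩
      rw [Minj.mul_apply] at hk
      have := u.2 hk
      exact hE₂r m hm ⟨k, this⟩
    · exact hE₂.image (u.2.injOn)
  have huE : ∀ a ∈ (↑S : Set ℕ), (u * e₀) a = a := by
    intro a ha
    rw [Minj.mul_apply, he₀S a ha]
    exact huS a ha
  obtain ⟨e1, h1⟩ := trivial_of_coimage_infinite h S hsupp e₀ he₀S hco₀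
  obtain ⟨e2, h2⟩ := trivial_of_coimage_infinite h S hsupp (u * e₀) huE hcoU
  exact trivial_right_cancel h e1 h1 e2 h2

end Key2

section InterSupport
open Set

/-- Supports are closed under intersection. -/
lemma Supported.inter {X : Type*} [MulAction (Minj ℕ) X] {x : X} (A B : Finset ℕ)
    (hA : Supported (↑A : Set ℕ) x) (hB : Supported (↑B : Set ℕ) x) :
    Supported (↑(A ∩ B) : Set ℕ) x := by
  classical
  intro u hu
  have hu' : ∀ c, c ∈ (↑A : Set ℕ) → c ∈ (↑B : Set ℕ) → u c = c := by
    intro c ha hb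
    apply hu
    rw [Finset.coe_inter]
    exact ⟨ha, hb⟩
  -- the injection ρ, fixing B, pushing everything else away from B and u⁻¹(B)
  have hBfin : ((↑B : Set ℕ) ∪ ⇑u ⁻¹' (↑B : Set ℕ)).Finite :=
    (B.finite_toSet).union ((B.finite_toSet).preimage u.2.injOn)
  set W : Set ℕ := ((↑B : Set ℕ) ∪ ⇑u ⁻¹' (↑B : Set ℕ))ᶜ with hWdef
  have hW : W.Infinite := hBfin.infinite_compl
  have hBc : (((↑B : Set ℕ))ᶜ).Infinite := B.finite_toSet.infinite_compl
  let φρ := eqvInf _ _ hBc hW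
  have hdisjρ : ∀ e ∈ W, e ∉ (↑B : Set ℕ) := fun e he hb => he (Or.inl hb)
  let ρ : Minj ℕ := ⟨extendId (↑B) W φρ, extendId_inj φρ hdisjρ⟩
  have hρB : ∀ c ∈ (↑B : Set ℕ), ρ c = c := fun c hc => extendId_mem φρ hc
  set u₁ : Minj ℕ := u * ρ with hu₁def
  have hii : ∀ n, n ∉ (↑B : Set ℕ) → u₁ n ∉ (↑B : Set ℕ) := by
    intro n hn hmem
    have h1 : ρ n = ((φρ ⟨n, hn⟩ : ↥W) : ℕ) := extendId_not_mem φρ hn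
    have hw : ((φρ ⟨n, hn⟩ : ↥W) : ℕ) ∈ W := (φρ ⟨n, hn⟩).2
    have : u₁ n = u (ρ n) := Minj.mul_apply u ρ n
    rw [this, h1] at hmem
    exact hw (Or.inr hmem)
  have hu₁fix : ∀ c, c ∈ (↑A : Set ℕ) → c ∈ (↑B : Set ℕ) → u₁ c = c := by
    intro c ha hb
    have : u₁ c = u (ρ c) := Minj.mul_apply u ρ c
    rw [this, hρB c hb]
    exact hu' c ha hb
  -- split the cofinite set G
  have hABfin : ((↑A : Set ℕ) ∪ (↑B : Set ℕ)).Finite := (A.finite_toSet).union B.finite_toSet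
  set G : Set ℕ := ((↑A : Set ℕ) ∪ (↑B : Set ℕ))ᶜ with hGdef
  have hG : G.Infinite := hABfin.infinite_compl
  obtain ⟨G₁, hG₁sub, hG₁, hG₂inf⟩ := exists_split _ hG
  set G₂ : Set ℕ := G \ G₁ with hG₂def
  -- the injection a, fixing A
  have hAc : (((↑A : Set ℕ))ᶜ).Infinite := A.finite_toSet.infinite_compl
  let φa := eqvInf _ _ hAc hG₁
  have hG₁A : ∀ e ∈ G₁, e ∉ (↑A : Set ℕ) := fun e he ha => (hG₁sub he) (Or.inl ha)
  let a : Minj ℕ := ⟨extendId (↑A) G₁ φa, extendId_inj φa hG₁A⟩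
  have haA : ∀ c ∈ (↑A : Set ℕ), a c = c := fun c hc => extendId_mem φa hc
  -- the injection b, fixing B
  set R : Set ℕ := ((↑B : Set ℕ) ∪ (↑A : Set ℕ) ∪ G₁)ᶜ with hRdef
  have hG₂R : G₂ ⊆ R := by
    rintro n ⟨hnG, hnG₁⟩
    rintro ((hb | ha) | hg)
    · exact hnG (Or.inr hb)
    · exact hnG (Or.inl ha)
    · exact hnG₁ hg
  have hR : R.Infinite := hG₂inf.mono hG₂R
  have himg : (⇑u₁ '' G₂).Infinite := hG₂inf.image u₁.2.injOn
  let φb := eqvInf _ _ hR himg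
  let bf : ℕ → ℕ := fun n =>
    if hb : n ∈ (↑B : Set ℕ) then n
    else if hag : n ∈ (↑A : Set ℕ) ∪ G₁ then u₁ n
    else ((φb ⟨n, fun hm => hm.elim (fun hm' => hm'.elim hb (fun q => hag (Or.inl q)))
      (fun q => hag (Or.inr q))⟩ : ↥(⇑u₁ '' G₂)) : ℕ)
  have hb1 : ∀ n (_ : n ∈ (↑B : Set ℕ)), bf n = n := fun n hn => dif_pos hn
  have hb2 : ∀ n (_ : n ∉ (↑B : Set ℕ)) (_ : n ∈ (↑A : Set ℕ) ∪ G₁), bf n = u₁ n := by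
    intro n hn hag; simp only [bf, dif_neg hn, dif_pos hag]
  have hb3 : ∀ n (hn : n ∉ (↑B : Set ℕ)) (hag : n ∉ (↑A : Set ℕ) ∪ G₁),
      ∃ hR' : n ∈ R, bf n = ((φb ⟨n, hR'⟩ : ↥(⇑u₁ '' G₂)) : ℕ) := by
    intro n hn hag
    refine ⟨fun hm => hm.elim (fun hm' => hm'.elim hn (fun q => hag (Or.inl q)))
      (fun q => hag (Or.inr q)), ?_⟩
    simp only [bf, dif_neg hn, dif_neg hag]
  -- branch values of 2 and 3 avoid B
  have hval2 : ∀ n, n ∉ (↑B : Set ℕ) → u₁ n ∉ (↑B : Set ℕ) := hii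
  have hval3 : ∀ (m : ℕ), m ∈ ⇑u₁ '' G₂ → m ∉ (↑B : Set ℕ) := by
    rintro _ ⟨m, hm, rfl⟩
    exact hii m (fun hb => hm.1 (Or.inr hb))
  have hG₂AG : ∀ m ∈ G₂, m ∉ (↑A : Set ℕ) ∪ G₁ := by
    rintro m hm (ha | hg)
    · exact hm.1 (Or.inl ha)
    · exact hm.2 hg
  have hbinj : Function.Injective bf := by
    intro m n hmn
    by_cases hm : m ∈ (↑B : Set ℕ) <;> by_cases hn : n ∈ (↑B : Set ℕ)
    · rwa [hb1 m hm, hb1 n hn] at hmn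
    · rw [hb1 m hm] at hmn
      by_cases hag : n ∈ (↑A : Set ℕ) ∪ G₁
      · rw [hb2 n hn hag] at hmn
        exact absurd (hmn ▸ hm) (hval2 n hn)
      · obtain ⟨hR', heq⟩ := hb3 n hn hag
        rw [heq] at hmn
        exact absurd (hmn ▸ hm) (hval3 _ (φb ⟨n, hR'⟩).2)
    · rw [hb1 n hn] at hmn
      by_cases hag : m ∈ (↑A : Set ℕ) ∪ G₁
      · rw [hb2 m hm hag] at hmn
        exact absurd (hmn ▸ hn) (hval2 m hm)
      · obtain ⟨hR', heq⟩ := hb3 m hm hag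
        rw [heq] at hmn
        exact absurd (hmn ▸ hn) (hval3 _ (φb ⟨m, hR'⟩).2)
    · by_cases hagm : m ∈ (↑A : Set ℕ) ∪ G₁ <;> by_cases hagn : n ∈ (↑A : Set ℕ) ∪ G₁
      · rw [hb2 m hm hagm, hb2 n hn hagn] at hmn
        exact u₁.2 hmn
      · obtain ⟨hR', heq⟩ := hb3 n hn hagn
        rw [hb2 m hm hagm, heq] at hmn
        obtain ⟨k, hk, hk2⟩ := (φb ⟨n, hR'⟩).2
        rw [← hk2] at hmn
        have := u₁.2 hmn
        exact absurd hagm (this ▸ hG₂AG k hk)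
      · obtain ⟨hR', heq⟩ := hb3 m hm hagm
        rw [hb2 n hn hagn, heq] at hmn
        obtain ⟨k, hk, hk2⟩ := (φb ⟨m, hR'⟩).2
        rw [← hk2] at hmn
        have := u₁.2 hmn.symm
        exact absurd hagn (this ▸ hG₂AG k hk)
      · obtain ⟨hRm, heqm⟩ := hb3 m hm hagm
        obtain ⟨hRn, heqn⟩ := hb3 n hn hagn
        rw [heqm, heqn] at hmn
        have := φb.injective (Subtype.ext (Subtype.ext_iff.mp (Subtype.ext hmn)))
        exact Subtype.ext_iff.mp this
  let b : Minj ℕ := ⟨bf, hbinj⟩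
  have hbB : ∀ c ∈ (↑B : Set ℕ), b c = c := fun c hc => hb1 c hc
  -- key identity
  have hkey : b * a = u₁ * a := by
    apply Minj.ext'
    intro n
    rw [Minj.mul_apply, Minj.mul_apply]
    show bf (a n) = u₁ (a n)
    by_cases hnA : n ∈ (↑A : Set ℕ)
    · rw [haA n hnA]
      by_cases hnB : n ∈ (↑B : Set ℕ)
      · rw [hb1 n hnB, hu₁fix n hnA hnB]
      · exact hb2 n hnB (Or.inl hnA)
    · have h1 : a n = ((φa ⟨n, hnA⟩ : ↥G₁) : ℕ) := extendId_not_mem φa hnA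
      have hg : ((φa ⟨n, hnA⟩ : ↥G₁) : ℕ) ∈ G₁ := (φa ⟨n, hnA⟩).2
      have hnB' : a n ∉ (↑B : Set ℕ) := by
        rw [h1]; exact fun hb => (hG₁sub hg) (Or.inr hb)
      have hag : a n ∈ (↑A : Set ℕ) ∪ G₁ := by rw [h1]; exact Or.inr hg
      exact hb2 (a n) hnB' hag
  -- conclude
  have hax : a • x = x := hA a haA
  have hρx : ρ • x = x := hB ρ hρB
  have hbx : b • x = x := hB b hbB
  calc u • x = u • (ρ • (a • x)) := by rw [hax, hρx]
    _ = (u₁ * a) • x := by rw [mul_smul, mul_smul]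
    _ = (b * a) • x := by rw [hkey]
    _ = b • (a • x) := mul_smul b a x
    _ = x := by rw [hax, hbx]

end InterSupport

section SuppChar
open Set

lemma supp_is_support {X : Type*} [MulAction (Minj ℕ) X] {x : X} (hx : FinSupported (U := ℕ) x) :
    ∃ B : Finset ℕ, supp (U := ℕ) x = (↑B : Set ℕ) ∧ Supported (↑B : Set ℕ) x := by
  classical
  obtain ⟨A₀, hA₀⟩ := hx
  have hex : ∃ n, ∃ B : Finset ℕ, B.card = n ∧ Supported (↑B : Set ℕ) x :=
    ⟨A₀.card, A₀, rfl, hA₀⟩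
  obtain ⟨B, hBcard, hBsupp⟩ := Nat.find_spec hex
  have hmin : ∀ Cs : Finset ℕ, Supported (↑Cs : Set ℕ) x → B ⊆ Cs := by
    intro Cs hCs
    have hint := Supported.inter B Cs hBsupp hCs
    have hge : Nat.find hex ≤ (B ∩ Cs).card := Nat.find_min' hex ⟨B ∩ Cs, rfl, hint⟩
    have hsub : B ∩ Cs ⊆ B := Finset.inter_subset_left
    have heq : B ∩ Cs = B := Finset.eq_of_subset_of_card_le hsub (by omega)
    rw [Finset.inter_eq_left] at heq
    exact heq
  refine ⟨B, ?_, hBsupp⟩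
  ext i
  constructor
  · intro hi
    exact hi B hBsupp
  · intro hi A hA
    exact hmin A hA hi

end SuppChar

section PermExtend
open Set

lemma exists_perm_extend (S : Finset ℕ) (v : Minj ℕ) :
    ∃ π ρ : Minj ℕ, (∀ n, ρ (π n) = n) ∧ (∀ n, π (ρ n) = n) ∧
      ∀ a ∈ (↑S : Set ℕ), π a = v a := by
  classical
  have himg : ((⇑v '' (↑S : Set ℕ))).Finite := S.finite_toSet.image _
  have hc1 : (((↑S : Set ℕ))ᶜ).Infinite := S.finite_toSet.infinite_compl
  have hc2 : ((⇑v '' (↑S : Set ℕ))ᶜ).Infinite := himg.infinite_compl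
  let e₁ : ↥(↑S : Set ℕ) ≃ ↥(⇑v '' (↑S : Set ℕ)) := Equiv.Set.image ⇑v (↑S : Set ℕ) v.2
  let e₂ := eqvInf _ _ hc1 hc2
  let g : ℕ ≃ ℕ :=
    ((Equiv.Set.sumCompl (↑S : Set ℕ)).symm.trans ((e₁.sumCongr e₂).trans
      (Equiv.Set.sumCompl (⇑v '' (↑S : Set ℕ)))))
  refine ⟨⟨(g : ℕ → ℕ), g.injective⟩, ⟨(g.symm : ℕ → ℕ), g.symm.injective⟩, ?_, ?_, ?_⟩
  · intro n; exact g.symm_apply_apply n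
  · intro n; exact g.apply_symm_apply n
  · intro a ha
    show g a = v a
    simp only [g, Equiv.trans_apply]
    rw [Equiv.Set.sumCompl_symm_apply_of_mem ha]
    simp only [Equiv.sumCongr_apply, Sum.map_inl]
    rw [Equiv.Set.sumCompl_apply_inl]
    simp [e₁, Equiv.Set.image, Equiv.Set.imageOfInjOn]

end PermExtend

/-- If `v` and `w` agree on `supp x` and `x` is finitely supported, then `v • x = w • x`,
`ι(v,x) = ι(w,x)`, and consequently `[v,u]^x = [w,u]^x` and `[u,v]^x = [u,w]^x` for all `u`. -/
theorem stmt13 (C : Type*) [Category C] [MulAction (Minj ℕ) C] (h : MCat ℕ C)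
    (x : C) (hx : FinSupported (U := ℕ) x)
    (v w : Minj ℕ) (hvw : ∀ a ∈ supp (U := ℕ) x, v a = w a) :
    ∃ e : v • x = w • x,
      (h.ι v x).hom = (h.ι w x).hom ≫ eqToHom e.symm ∧
      (∀ u : Minj ℕ, h.tw v u x = h.tw w u x ≫ eqToHom e.symm) ∧
      (∀ u : Minj ℕ, h.tw u v x = eqToHom e ≫ h.tw u w x) := by
  obtain ⟨B, hsuppEq, hBsupp⟩ := supp_is_support hx
  have hvwB : ∀ a ∈ (↑B : Set ℕ), v a = w a := by
    intro a ha
    apply hvw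
    rw [hsuppEq]
    exact ha
  obtain ⟨π, ρπ, hinv1, hinv2, hπv⟩ := exists_perm_extend B v
  have hrB : ∀ a ∈ (↑B : Set ℕ), (ρπ * v) a = a := by
    intro a ha
    rw [Minj.mul_apply, ← hπv a ha, hinv1]
  have hsB : ∀ a ∈ (↑B : Set ℕ), (ρπ * w) a = a := by
    intro a ha
    rw [Minj.mul_apply, ← hvwB a ha, ← hπv a ha, hinv1]
  obtain ⟨er, hr⟩ := trivial_of_fixes_support h B hBsupp (ρπ * v) hrB
  obtain ⟨es, hs⟩ := trivial_of_fixes_support h B hBsupp (ρπ * w) hsB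
  have hv : π * (ρπ * v) = v := by
    apply Minj.ext'
    intro n
    rw [Minj.mul_apply, Minj.mul_apply, hinv2]
  have hw : π * (ρπ * w) = w := by
    apply Minj.ext'
    intro n
    rw [Minj.mul_apply, Minj.mul_apply, hinv2]
  obtain ⟨e₁, H₁⟩ := ι_perm_decomp h hv er hr
  obtain ⟨e₂, H₂⟩ := ι_perm_decomp h hw es hs
  refine ⟨e₁.trans e₂.symm, ?_, ?_, ?_⟩
  · rw [H₁, H₂]
    simp
  · intro u
    simp only [MCat.tw]
    rw [H₁, H₂]
    simp
  · intro u
    simp only [MCat.tw]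
    have hVW : (h.ι v x).hom = (h.ι w x).hom ≫ eqToHom (e₁.trans e₂.symm).symm := by
      rw [H₁, H₂]; simp
    have hVW2 : (h.ι w x).hom = (h.ι v x).hom ≫ eqToHom (e₁.trans e₂.symm) := by
      rw [hVW]; simp
    have hinv : (h.ι v x).inv = eqToHom (e₁.trans e₂.symm) ≫ (h.ι w x).inv := by
      rw [Iso.eq_comp_inv, hVW2]
      simp
    rw [hinv]
    simp
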